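/- The largest real root β of B satisfies β ≥ cθ² + σ̄², with equality if and only if σ_1² = ⋯ = σ_L². -/

import Mathlib

open Finset Filter Set Topology

/-- `β ≥ cθ² + σ̄²`, with equality iff the noise is homoscedastic. -/
theorem beta_lower_bound
    (c θ : ℝ) (hc : 0 < c) (hθ : 0 < θ)
    (L : ℕ) (hL : 1 ≤ L) (p σ : Fin L → ℝ)
    (hp : ∀ ℓ, 0 < p ℓ) (hpsum : ∑ ℓ, p ℓ = 1)
    (hσ : ∀ ℓ, 0 < σ ℓ)
    (σmax : ℝ) (hmaxle : ∀ ℓ, σ ℓ ≤ σmax) (hmaxmem : ∃ ℓ, σ ℓ = σmax)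
    (B : ℝ → ℝ) (hB : ∀ x, B x = 1 - c * θ ^ 2 * ∑ ℓ, p ℓ / (x - σ ℓ))
    (β : ℝ) (hβmem : σmax < β) (hβroot : B β = 0) :
    c * θ ^ 2 + (∑ ℓ, p ℓ * σ ℓ) ≤ β ∧
    (β = c * θ ^ 2 + (∑ ℓ, p ℓ * σ ℓ) ↔ (∀ ℓ ℓ' : Fin L, σ ℓ = σ ℓ')) := by
  set σb := ∑ ℓ, p ℓ * σ ℓ with hσb
  have hσbmax : σb ≤ σmax := by
    calc σb ≤ ∑ ℓ, p ℓ * σmax :=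
          Finset.sum_le_sum (fun ℓ _ => mul_le_mul_of_nonneg_left (hmaxle ℓ) (hp ℓ).le)
      _ = σmax := by rw [← Finset.sum_mul, hpsum, one_mul]
  have ha : 0 < β - σb := by linarith
  have hb : ∀ ℓ, 0 < β - σ ℓ := fun ℓ => by have := hmaxle ℓ; linarith
  have hcθ : 0 < c * θ ^ 2 := by positivity
  have hS : (∑ ℓ, p ℓ / (β - σ ℓ)) = 1 / (c * θ ^ 2) := by
    have h := hβroot
    rw [hB] at h
    rw [eq_div_iff hcθ.ne']
    linarith
  have hpb : ∑ ℓ, p ℓ * (β - σ ℓ) = β - σb := by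
    simp only [mul_sub]
    rw [Finset.sum_sub_distrib, ← Finset.sum_mul, hpsum, one_mul, hσb]
  have key : ∑ ℓ, p ℓ * (σ ℓ - σb) ^ 2 / ((β - σ ℓ) * (β - σb))
      = (β - σb) / (c * θ ^ 2) - 1 := by
    have h1 : ∀ ℓ ∈ Finset.univ, p ℓ * (σ ℓ - σb) ^ 2 / ((β - σ ℓ) * (β - σb))
        = (β - σb) * (p ℓ / (β - σ ℓ)) + (p ℓ * (β - σ ℓ)) / (β - σb) - 2 * p ℓ := by
      intro ℓ _
      have h2 := hb ℓ
      field_simp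
      ring
    rw [Finset.sum_congr rfl h1, Finset.sum_sub_distrib, Finset.sum_add_distrib,
      ← Finset.mul_sum, hS, ← Finset.sum_div, hpb, ← Finset.mul_sum, hpsum,
      div_self ha.ne']
    ring
  have hterm : ∀ ℓ ∈ Finset.univ, 0 ≤ p ℓ * (σ ℓ - σb) ^ 2 / ((β - σ ℓ) * (β - σb)) := by
    intro ℓ _
    have := hp ℓ
    have := hb ℓ
    positivity
  have hT : 0 ≤ (β - σb) / (c * θ ^ 2) - 1 := key ▸ Finset.sum_nonneg hterm
  have hineq : c * θ ^ 2 + σb ≤ β := by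
    rw [le_sub_iff_add_le, le_div_iff₀ hcθ] at hT
    linarith
  refine ⟨hineq, ?_, ?_⟩
  · intro heq
    have hTz : ∑ ℓ, p ℓ * (σ ℓ - σb) ^ 2 / ((β - σ ℓ) * (β - σb)) = 0 := by
      rw [key, heq]
      field_simp
      ring
    have hz := (Finset.sum_eq_zero_iff_of_nonneg hterm).mp hTz
    have hall : ∀ ℓ, σ ℓ = σb := by
      intro ℓ
      have h := hz ℓ (Finset.mem_univ ℓ)
      have hpℓ := hp ℓ
      have hbℓ := hb ℓ
      have hd : ((β - σ ℓ) * (β - σb)) ≠ 0 := by positivity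
      rw [div_eq_zero_iff] at h
      rcases h with h | h
      · have : (σ ℓ - σb) ^ 2 = 0 := by
          rcases mul_eq_zero.mp h with h' | h'
          · exact absurd h' hpℓ.ne'
          · exact h'
        have := pow_eq_zero_iff (n := 2) (by norm_num) |>.mp this
        linarith
      · exact absurd h hd
    intro ℓ ℓ'
    rw [hall ℓ, hall ℓ']
  · intro hall
    obtain ⟨ℓ₀, _⟩ := hmaxmem
    have hconst : ∀ ℓ, σ ℓ = σ ℓ₀ := fun ℓ => hall ℓ ℓ₀
    have hσbe : σb = σ ℓ₀ := by
      rw [hσb]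
      calc ∑ ℓ, p ℓ * σ ℓ = ∑ ℓ, p ℓ * σ ℓ₀ := by
            exact Finset.sum_congr rfl (fun ℓ _ => by rw [hconst ℓ])
        _ = σ ℓ₀ := by rw [← Finset.sum_mul, hpsum, one_mul]
    have hTz : ∑ ℓ, p ℓ * (σ ℓ - σb) ^ 2 / ((β - σ ℓ) * (β - σb)) = 0 := by
      apply Finset.sum_eq_zero
      intro ℓ _
      rw [hσbe, hconst ℓ]
      simp
    rw [hTz] at key
    have : (β - σb) = c * θ ^ 2 := by
      field_simp at key
      linarith
    linarith
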